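/- There exists a regular epimorphism Φ of coisotropic index sets which does not split, i.e. has no section Ψ with Φ ∘ Ψ = id. Concretely, with M = ({0,1}, {0,1}, ∅) with ι_M = id and N = ({0}, {0,1}, ∅) with ι_N the constant map, the morphism Φ = (0, id) is a regular epimorphism admitting no section. -/
import Mathlib


/-! Coisotropic index sets and their morphisms. -/

universe u

structure CoisoSet : Type (u + 1) where
  T : Type u
  W : Type u
  N : Set W
  str : W → T

structure CoisoSetHom (M P : CoisoSet.{u}) : Type u where
  T : M.T → P.T
  W : M.W → P.W
  comm : ∀ x : M.W, T (M.str x) = P.str (W x)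
  null : ∀ x ∈ M.N, W x ∈ P.N

def CoisoSetHom.id (M : CoisoSet) : CoisoSetHom M M :=
  ⟨fun x => x, fun x => x, fun _ => rfl, fun _ h => h⟩

def CoisoSetHom.comp {M P Q : CoisoSet} (g : CoisoSetHom P Q)
    (f : CoisoSetHom M P) : CoisoSetHom M Q :=
  ⟨g.T ∘ f.T, g.W ∘ f.W,
    fun x => by simp only [Function.comp_apply, f.comm, g.comm],
    fun x hx => g.null _ (f.null _ hx)⟩

/-- `Φ` is a coequalizer of the parallel pair `(a, b)`. -/
def IsCoequalizerOf {M P G : CoisoSet} (Φ : CoisoSetHom M P)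
    (a b : CoisoSetHom G M) : Prop :=
  Φ.comp a = Φ.comp b ∧
    ∀ (H : CoisoSet) (h : CoisoSetHom M H), h.comp a = h.comp b →
      ∃! u : CoisoSetHom P H, u.comp Φ = h

def IsRegularEpi {M P : CoisoSet} (Φ : CoisoSetHom M P) : Prop :=
  ∃ (G : CoisoSet) (a b : CoisoSetHom G M), IsCoequalizerOf Φ a b

/-- The coisotropic index set `({0,1}, {0,1}, ∅)` with `ι = id`. -/
def exM : CoisoSet.{0} := ⟨Bool, Bool, ∅, fun x => x⟩

/-- The coisotropic index set `({0}, {0,1}, ∅)` with `ι` constant. -/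
def exN : CoisoSet.{0} := ⟨PUnit, Bool, ∅, fun _ => PUnit.unit⟩

/-- The morphism `Φ = (0, id) : exM → exN`. -/
def exΦ : CoisoSetHom exM exN :=
  ⟨fun _ => PUnit.unit, fun x => x, fun _ => rfl, fun _ hx => hx.elim⟩


lemma CoisoSetHom.ext' {M P : CoisoSet} {f g : CoisoSetHom M P}
    (hT : f.T = g.T) (hW : f.W = g.W) : f = g := by
  cases f; cases g; cases hT; cases hW; rfl

def exG : CoisoSet.{0} := ⟨Bool, Empty, ∅, Empty.elim⟩

def exA : CoisoSetHom exG exM :=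
  ⟨fun x => x, Empty.elim, fun x => x.elim, fun x _ => x.elim⟩

def exB : CoisoSetHom exG exM :=
  ⟨fun x => !x, Empty.elim, fun x => x.elim, fun x _ => x.elim⟩

/-- the concrete morphism `Φ = (0, id)` is a regular
epimorphism of coisotropic index sets admitting no section; in particular
not every regular epimorphism of coisotropic index sets splits. -/
theorem regularEpi_not_split :
    IsRegularEpi exΦ ∧
      ¬ ∃ Ψ : CoisoSetHom exN exM, exΦ.comp Ψ = CoisoSetHom.id exN := by
  constructor
  · refine ⟨exG, exA, exB, ?_, ?_⟩
    · exact CoisoSetHom.ext' rfl (funext fun x => x.elim)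
    · intro H h hab
      have hTc : ∀ x : Bool, h.T x = h.T true := by
        have := congrArg CoisoSetHom.T hab
        intro x
        cases x
        · exact (congrFun this true).symm
        · rfl
      refine ⟨⟨fun _ => h.T true, h.W, ?_, ?_⟩, ?_, ?_⟩
      · intro x
        have := h.comm x
        simpa [exM, exN] using (hTc x).symm.trans this
      · intro x hx; exact hx.elim
      · exact CoisoSetHom.ext' (funext fun x => (hTc x).symm) rfl
      · intro u hu
        refine CoisoSetHom.ext' ?_ ?_
        · funext x
          cases x
          exact congrFun (congrArg CoisoSetHom.T hu) true
        · have := congrArg CoisoSetHom.W hu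
          exact this
  · rintro ⟨Ψ, hΨ⟩
    have hW : ∀ x : Bool, Ψ.W x = x := fun x =>
      congrFun (congrArg CoisoSetHom.W hΨ) x
    have h1 := Ψ.comm true
    have h2 := Ψ.comm false
    simp only [exN, exM, hW] at h1 h2
    exact Bool.noConfusion (h1.symm.trans h2)
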